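/- For uniform quadratic (degree 2) cardinal B-splines with spacing h, the quadrature rule supported on the 5 points consisting of the knots and midpoints inside the support of B_i, with weights (h/30)·[2, 7, 12, 7, 2], exactly reproduces ∫ B_i(ζ) B_j(ζ) dζ for all j with |j - i| ≤ 2. -/

import Mathlib

open MeasureTheory

/-- The standard quadratic cardinal B-spline with knots `0,1,2,3`. -/
noncomputable def N2 (t : ℝ) : ℝ :=
  if 0 ≤ t ∧ t ≤ 1 then t ^ 2 / 2
  else if 1 ≤ t ∧ t ≤ 2 then (-2 * t ^ 2 + 6 * t - 3) / 2
  else if 2 ≤ t ∧ t ≤ 3 then (3 - t) ^ 2 / 2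
  else 0

/-- Uniform quadratic cardinal B-spline with spacing `h`: the translate by `i·h`
of `N2(·/h)`, supported on `[i·h, (i+3)·h]`. -/
noncomputable def B2 (h : ℝ) (i : ℤ) (ζ : ℝ) : ℝ := N2 (ζ / h - (i : ℝ))

lemma quartic_int (a b c0 c1 c2 c3 c4 : ℝ) :
    ∫ x in a..b, (c0 + c1*x + c2*x^2 + c3*x^3 + c4*x^4) =
      (c0*b + c1*b^2/2 + c2*b^3/3 + c3*b^4/4 + c4*b^5/5)
        - (c0*a + c1*a^2/2 + c2*a^3/3 + c3*a^4/4 + c4*a^5/5) := by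
  have key : ∀ x ∈ Set.uIcc a b, HasDerivAt
      (fun x : ℝ => c0*x + c1*x^2/2 + c2*x^3/3 + c3*x^4/4 + c4*x^5/5)
      (c0 + c1*x + c2*x^2 + c3*x^3 + c4*x^4) x := by
    intro x _
    have h1 := ((((((hasDerivAt_id x).const_mul c0).add
        (((hasDerivAt_pow 2 x).const_mul c1).div_const 2)).add
        (((hasDerivAt_pow 3 x).const_mul c2).div_const 3)).add
        (((hasDerivAt_pow 4 x).const_mul c3).div_const 4)).add
        (((hasDerivAt_pow 5 x).const_mul c4).div_const 5))
    convert h1 using 2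
    · rfl
    · rfl
    · rfl
    all_goals push_cast; ring
  rw [intervalIntegral.integral_eq_sub_of_hasDerivAt key
    (by apply Continuous.intervalIntegrable; continuity)]

lemma N2_zero {t : ℝ} (ht : t ≤ 0 ∨ 3 ≤ t) : N2 t = 0 := by
  simp only [N2]
  split_ifs with h1 h2 h3 <;> rcases ht with h | h <;>
    nlinarith [sq_nonneg t, sq_nonneg (3 - t)]

lemma N2_eq1 {t : ℝ} (h0 : 0 ≤ t) (h1 : t ≤ 1) : N2 t = t ^ 2 / 2 := by
  simp only [N2]
  rw [if_pos ⟨h0, h1⟩]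

lemma N2_eq2 {t : ℝ} (h1 : 1 ≤ t) (h2 : t ≤ 2) : N2 t = (-2 * t ^ 2 + 6 * t - 3) / 2 := by
  simp only [N2]
  split_ifs with ha hb hc
  · nlinarith [ha.1, ha.2]
  · rfl
  · exact absurd ⟨h1, h2⟩ hb
  · exact absurd ⟨h1, h2⟩ hb

lemma N2_eq3 {t : ℝ} (h2 : 2 ≤ t) (h3 : t ≤ 3) : N2 t = (3 - t) ^ 2 / 2 := by
  simp only [N2]
  split_ifs with ha hb hc
  · nlinarith [ha.1, ha.2]
  · nlinarith [hb.1, hb.2]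
  · rfl
  · exact absurd ⟨h2, h3⟩ hc

lemma piece_val {f : ℝ → ℝ} {a b : ℝ} (c0 c1 c2 c3 c4 : ℝ)
    (hfg : ∀ t ∈ Set.uIcc a b, f t = (c0 + c1*t + c2*t^2 + c3*t^3 + c4*t^4 : ℝ)) :
    ∫ t in a..b, f t = (c0*b + c1*b^2/2 + c2*b^3/3 + c3*b^4/4 + c4*b^5/5)
      - (c0*a + c1*a^2/2 + c2*a^3/3 + c3*a^4/4 + c4*a^5/5) := by
  rw [intervalIntegral.integral_congr hfg, quartic_int]

lemma piece_ii {f : ℝ → ℝ} {a b : ℝ} (c0 c1 c2 c3 c4 : ℝ)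
    (hfg : ∀ t ∈ Set.uIcc a b, f t = (c0 + c1*t + c2*t^2 + c3*t^3 + c4*t^4 : ℝ)) :
    IntervalIntegrable f volume a b := by
  have hg : IntervalIntegrable (fun t : ℝ => c0 + c1*t + c2*t^2 + c3*t^3 + c4*t^4) volume a b :=
    Continuous.intervalIntegrable (by continuity) a b
  rw [intervalIntegrable_iff] at hg ⊢
  exact hg.congr_fun (fun t ht => (hfg t (Set.uIoc_subset_uIcc ht)).symm) measurableSet_uIoc

lemma split3 {f : ℝ → ℝ} (i1 : IntervalIntegrable f volume 0 1)
    (i2 : IntervalIntegrable f volume 1 2) (i3 : IntervalIntegrable f volume 2 3) :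
    ∫ t in (0:ℝ)..3, f t
      = (∫ t in (0:ℝ)..1, f t) + (∫ t in (1:ℝ)..2, f t) + (∫ t in (2:ℝ)..3, f t) := by
  rw [add_assoc, intervalIntegral.integral_add_adjacent_intervals i2 i3,
    intervalIntegral.integral_add_adjacent_intervals i1 (i2.trans i3)]

lemma reduce (h : ℝ) (hh : 0 < h) (i j : ℤ) :
    ∫ ζ : ℝ, B2 h i ζ * B2 h j ζ
      = h * ∫ t : ℝ in (0:ℝ)..3, N2 t * N2 (t - ((j:ℝ) - (i:ℝ))) := by
  have hne : h ≠ 0 := hh.ne'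
  have hsupp : ∀ ζ ∉ Set.Ioc ((i:ℝ)*h) (((i:ℝ)+3)*h), B2 h i ζ * B2 h j ζ = 0 := by
    intro ζ hζ
    simp only [Set.mem_Ioc, not_and_or, not_lt, not_le] at hζ
    have hz : B2 h i ζ = 0 := by
      unfold B2
      apply N2_zero
      rcases hζ with hl | hr
      · left
        have : ζ / h ≤ (i:ℝ) := by rw [div_le_iff₀ hh]; linarith
        linarith
      · right
        have : (i:ℝ) + 3 ≤ ζ / h := by rw [le_div_iff₀ hh]; linarith
        linarith
    rw [hz, zero_mul]
  rw [← setIntegral_eq_integral_of_forall_compl_eq_zero hsupp,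
    ← intervalIntegral.integral_of_le (by nlinarith : (i:ℝ)*h ≤ ((i:ℝ)+3)*h)]
  have h1 : (∫ ζ in ((i:ℝ)*h)..(((i:ℝ)+3)*h), B2 h i ζ * B2 h j ζ)
      = ∫ ζ in ((i:ℝ)*h)..(((i:ℝ)+3)*h),
          (fun x => N2 (x - (i:ℝ)) * N2 (x - (j:ℝ))) (ζ / h) := rfl
  rw [h1, intervalIntegral.integral_comp_div (c := h) (fun x => N2 (x - (i:ℝ)) * N2 (x - (j:ℝ))) hne,
    show (i:ℝ)*h/h = (i:ℝ) by field_simp,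
    show ((i:ℝ)+3)*h/h = (i:ℝ)+3 by field_simp, smul_eq_mul]
  congr 1
  have h2 : (∫ x in ((i:ℝ))..((i:ℝ)+3), N2 (x - (i:ℝ)) * N2 (x - (j:ℝ)))
      = ∫ x in ((i:ℝ))..((i:ℝ)+3),
          (fun t => N2 t * N2 (t - ((j:ℝ) - (i:ℝ)))) (x - (i:ℝ)) := by
    apply intervalIntegral.integral_congr
    intro x _
    simp only
    rw [show x - (i:ℝ) - ((j:ℝ) - (i:ℝ)) = x - (j:ℝ) by ring]
  rw [h2, intervalIntegral.integral_comp_sub_right (fun t => N2 t * N2 (t - ((j:ℝ) - (i:ℝ)))) ((i:ℝ)),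
    show (i:ℝ) - (i:ℝ) = 0 by ring, show (i:ℝ) + 3 - (i:ℝ) = 3 by ring]

lemma I_m2 (k : ℝ) (hk : k = -2) :
    ∫ t : ℝ in (0:ℝ)..3, N2 t * N2 (t - k) = 1/120 := by
  subst hk
  have e1 : ∀ t ∈ Set.uIcc (0:ℝ) 1, N2 t * N2 (t - (-2:ℝ)) = (0 + 0*t + 1/4*t^2 + -1/2*t^3 + 1/4*t^4 : ℝ) := by
    intro t ht
    rw [Set.uIcc_of_le (by norm_num)] at ht
    obtain ⟨h1, h2⟩ := ht
    rw [N2_eq1 h1 h2, N2_eq3 (t := t - (-2:ℝ)) (by linarith) (by linarith)]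
    ring
  have e2 : ∀ t ∈ Set.uIcc (1:ℝ) 2, N2 t * N2 (t - (-2:ℝ)) = (0 + 0*t + 0*t^2 + 0*t^3 + 0*t^4 : ℝ) := by
    intro t ht
    rw [Set.uIcc_of_le (by norm_num)] at ht
    obtain ⟨h1, h2⟩ := ht
    rw [N2_zero (t := t - (-2:ℝ)) (Or.inr (by linarith))]
    ring
  have e3 : ∀ t ∈ Set.uIcc (2:ℝ) 3, N2 t * N2 (t - (-2:ℝ)) = (0 + 0*t + 0*t^2 + 0*t^3 + 0*t^4 : ℝ) := by
    intro t ht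
    rw [Set.uIcc_of_le (by norm_num)] at ht
    obtain ⟨h1, h2⟩ := ht
    rw [N2_zero (t := t - (-2:ℝ)) (Or.inr (by linarith))]
    ring
  rw [split3 (piece_ii _ _ _ _ _ e1) (piece_ii _ _ _ _ _ e2) (piece_ii _ _ _ _ _ e3),
      piece_val _ _ _ _ _ e1, piece_val _ _ _ _ _ e2, piece_val _ _ _ _ _ e3]
  norm_num

lemma I_m1 (k : ℝ) (hk : k = -1) :
    ∫ t : ℝ in (0:ℝ)..3, N2 t * N2 (t - k) = 13/60 := by
  subst hk
  have e1 : ∀ t ∈ Set.uIcc (0:ℝ) 1, N2 t * N2 (t - (-1:ℝ)) = (0 + 0*t + 1/4*t^2 + 1/2*t^3 + -1/2*t^4 : ℝ) := by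
    intro t ht
    rw [Set.uIcc_of_le (by norm_num)] at ht
    obtain ⟨h1, h2⟩ := ht
    rw [N2_eq1 h1 h2, N2_eq2 (t := t - (-1:ℝ)) (by linarith) (by linarith)]
    ring
  have e2 : ∀ t ∈ Set.uIcc (1:ℝ) 2, N2 t * N2 (t - (-1:ℝ)) = (-3 + 9*t + -35/4*t^2 + 7/2*t^3 + -1/2*t^4 : ℝ) := by
    intro t ht
    rw [Set.uIcc_of_le (by norm_num)] at ht
    obtain ⟨h1, h2⟩ := ht
    rw [N2_eq2 h1 h2, N2_eq3 (t := t - (-1:ℝ)) (by linarith) (by linarith)]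
    ring
  have e3 : ∀ t ∈ Set.uIcc (2:ℝ) 3, N2 t * N2 (t - (-1:ℝ)) = (0 + 0*t + 0*t^2 + 0*t^3 + 0*t^4 : ℝ) := by
    intro t ht
    rw [Set.uIcc_of_le (by norm_num)] at ht
    obtain ⟨h1, h2⟩ := ht
    rw [N2_zero (t := t - (-1:ℝ)) (Or.inr (by linarith))]
    ring
  rw [split3 (piece_ii _ _ _ _ _ e1) (piece_ii _ _ _ _ _ e2) (piece_ii _ _ _ _ _ e3),
      piece_val _ _ _ _ _ e1, piece_val _ _ _ _ _ e2, piece_val _ _ _ _ _ e3]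
  norm_num

lemma I_0 (k : ℝ) (hk : k = 0) :
    ∫ t : ℝ in (0:ℝ)..3, N2 t * N2 (t - k) = 11/20 := by
  subst hk
  have e1 : ∀ t ∈ Set.uIcc (0:ℝ) 1, N2 t * N2 (t - (0:ℝ)) = (0 + 0*t + 0*t^2 + 0*t^3 + 1/4*t^4 : ℝ) := by
    intro t ht
    rw [Set.uIcc_of_le (by norm_num)] at ht
    obtain ⟨h1, h2⟩ := ht
    rw [N2_eq1 h1 h2, N2_eq1 (t := t - (0:ℝ)) (by linarith) (by linarith)]
    ring
  have e2 : ∀ t ∈ Set.uIcc (1:ℝ) 2, N2 t * N2 (t - (0:ℝ)) = (9/4 + -9*t + 12*t^2 + -6*t^3 + 1*t^4 : ℝ) := by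
    intro t ht
    rw [Set.uIcc_of_le (by norm_num)] at ht
    obtain ⟨h1, h2⟩ := ht
    rw [N2_eq2 h1 h2, N2_eq2 (t := t - (0:ℝ)) (by linarith) (by linarith)]
    ring
  have e3 : ∀ t ∈ Set.uIcc (2:ℝ) 3, N2 t * N2 (t - (0:ℝ)) = (81/4 + -27*t + 27/2*t^2 + -3*t^3 + 1/4*t^4 : ℝ) := by
    intro t ht
    rw [Set.uIcc_of_le (by norm_num)] at ht
    obtain ⟨h1, h2⟩ := ht
    rw [N2_eq3 h1 h2, N2_eq3 (t := t - (0:ℝ)) (by linarith) (by linarith)]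
    ring
  rw [split3 (piece_ii _ _ _ _ _ e1) (piece_ii _ _ _ _ _ e2) (piece_ii _ _ _ _ _ e3),
      piece_val _ _ _ _ _ e1, piece_val _ _ _ _ _ e2, piece_val _ _ _ _ _ e3]
  norm_num

lemma I_p1 (k : ℝ) (hk : k = 1) :
    ∫ t : ℝ in (0:ℝ)..3, N2 t * N2 (t - k) = 13/60 := by
  subst hk
  have e1 : ∀ t ∈ Set.uIcc (0:ℝ) 1, N2 t * N2 (t - (1:ℝ)) = (0 + 0*t + 0*t^2 + 0*t^3 + 0*t^4 : ℝ) := by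
    intro t ht
    rw [Set.uIcc_of_le (by norm_num)] at ht
    obtain ⟨h1, h2⟩ := ht
    rw [N2_zero (t := t - (1:ℝ)) (Or.inl (by linarith))]
    ring
  have e2 : ∀ t ∈ Set.uIcc (1:ℝ) 2, N2 t * N2 (t - (1:ℝ)) = (-3/4 + 3*t + -17/4*t^2 + 5/2*t^3 + -1/2*t^4 : ℝ) := by
    intro t ht
    rw [Set.uIcc_of_le (by norm_num)] at ht
    obtain ⟨h1, h2⟩ := ht
    rw [N2_eq2 h1 h2, N2_eq1 (t := t - (1:ℝ)) (by linarith) (by linarith)]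
    ring
  have e3 : ∀ t ∈ Set.uIcc (2:ℝ) 3, N2 t * N2 (t - (1:ℝ)) = (-99/4 + 39*t + -89/4*t^2 + 11/2*t^3 + -1/2*t^4 : ℝ) := by
    intro t ht
    rw [Set.uIcc_of_le (by norm_num)] at ht
    obtain ⟨h1, h2⟩ := ht
    rw [N2_eq3 h1 h2, N2_eq2 (t := t - (1:ℝ)) (by linarith) (by linarith)]
    ring
  rw [split3 (piece_ii _ _ _ _ _ e1) (piece_ii _ _ _ _ _ e2) (piece_ii _ _ _ _ _ e3),
      piece_val _ _ _ _ _ e1, piece_val _ _ _ _ _ e2, piece_val _ _ _ _ _ e3]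
  norm_num

lemma I_p2 (k : ℝ) (hk : k = 2) :
    ∫ t : ℝ in (0:ℝ)..3, N2 t * N2 (t - k) = 1/120 := by
  subst hk
  have e1 : ∀ t ∈ Set.uIcc (0:ℝ) 1, N2 t * N2 (t - (2:ℝ)) = (0 + 0*t + 0*t^2 + 0*t^3 + 0*t^4 : ℝ) := by
    intro t ht
    rw [Set.uIcc_of_le (by norm_num)] at ht
    obtain ⟨h1, h2⟩ := ht
    rw [N2_zero (t := t - (2:ℝ)) (Or.inl (by linarith))]
    ring
  have e2 : ∀ t ∈ Set.uIcc (1:ℝ) 2, N2 t * N2 (t - (2:ℝ)) = (0 + 0*t + 0*t^2 + 0*t^3 + 0*t^4 : ℝ) := by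
    intro t ht
    rw [Set.uIcc_of_le (by norm_num)] at ht
    obtain ⟨h1, h2⟩ := ht
    rw [N2_zero (t := t - (2:ℝ)) (Or.inl (by linarith))]
    ring
  have e3 : ∀ t ∈ Set.uIcc (2:ℝ) 3, N2 t * N2 (t - (2:ℝ)) = (9 + -15*t + 37/4*t^2 + -5/2*t^3 + 1/4*t^4 : ℝ) := by
    intro t ht
    rw [Set.uIcc_of_le (by norm_num)] at ht
    obtain ⟨h1, h2⟩ := ht
    rw [N2_eq3 h1 h2, N2_eq1 (t := t - (2:ℝ)) (by linarith) (by linarith)]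
    ring
  rw [split3 (piece_ii _ _ _ _ _ e1) (piece_ii _ _ _ _ _ e2) (piece_ii _ _ _ _ _ e3),
      piece_val _ _ _ _ _ e1, piece_val _ _ _ _ _ e2, piece_val _ _ _ _ _ e3]
  norm_num

/-- Weighted quadrature, 5 points (knots and midpoints inside `supp B_i`),
weights `(h/30)·[2,7,12,7,2]`, exactly reproduces `∫ B_i B_j` for `|j-i| ≤ 2`. -/
theorem stmt6 (h : ℝ) (hh : 0 < h) (i j : ℤ) (hij : |j - i| ≤ 2) :
    (h / 30) * 2 * B2 h j (((i : ℝ) + 1/2) * h)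
      + (h / 30) * 7 * B2 h j (((i : ℝ) + 1) * h)
      + (h / 30) * 12 * B2 h j (((i : ℝ) + 3/2) * h)
      + (h / 30) * 7 * B2 h j (((i : ℝ) + 2) * h)
      + (h / 30) * 2 * B2 h j (((i : ℝ) + 5/2) * h)
      = ∫ ζ : ℝ, B2 h i ζ * B2 h j ζ := by
  obtain ⟨d, rfl⟩ : ∃ d : ℤ, j = i + d := ⟨j - i, by ring⟩
  have hd : |d| ≤ 2 := by simpa using hij
  rw [abs_le] at hd
  obtain ⟨hd1, hd2⟩ := hd
  have hne : h ≠ 0 := hh.ne'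
  have hB : ∀ c : ℝ, B2 h (i + d) (((i:ℝ) + c) * h) = N2 (c - (d:ℝ)) := by
    intro c
    unfold B2
    rw [show ((i:ℝ) + c) * h / h - ((i + d : ℤ):ℝ) = c - (d:ℝ) by
      push_cast; field_simp; try ring]
  simp only [hB]
  rw [reduce h hh i (i + d)]
  have hc : ((i + d : ℤ):ℝ) - (i:ℝ) = (d:ℝ) := by push_cast; ring
  simp only [hc]
  interval_cases d
  · rw [I_m2 _ (by norm_num)]
    norm_num [N2]
    try ring
    try linarith
  · rw [I_m1 _ (by norm_num)]
    norm_num [N2]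
    try ring
    try linarith
  · rw [I_0 _ (by norm_num)]
    norm_num [N2]
    try ring
    try linarith
  · rw [I_p1 _ (by norm_num)]
    norm_num [N2]
    try ring
    try linarith
  · rw [I_p2 _ (by norm_num)]
    norm_num [N2]
    try ring
    try linarith
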